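/- Let G be a finite group and f : G → ℂ. Then the Radon transform of f vanishes identically (∑_{t ∈ ZMod n} f(x * γ(t)) = 0 for every n ≥ 2, every nontrivial homomorphism γ : ZMod n → G, and every x ∈ G) if and only if for every irreducible finite-dimensional complex representation ρ of G that has a nonzero fixed point (i.e. there exist x ∈ G with x ≠ 1 and v ≠ 0 with ρ(x) v = v), the Fourier coefficient ∑_{y ∈ G} f(y) • ρ(y) is the zero endomorphism. -/

import Mathlib

/-- The Radon transform of `f` at `(x, γ)`: the sum of `f` over the geodesic
determined by the homomorphism `γ : C_n → G`, translated by `x`. -/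
noncomputable def radonSum {G : Type*} [Group G] {n : ℕ} [NeZero n]
    (f : G → ℂ) (γ : Multiplicative (ZMod n) →* G) (x : G) : ℂ :=
  ∑ t : ZMod n, f (x * γ (Multiplicative.ofAdd t))

/-- All Radon transforms of `f` (over geodesics of all lengths `n ≥ 2`) vanish. -/
def RadonNull (G : Type*) [Group G] (f : G → ℂ) : Prop :=
  ∀ (n : ℕ) (hn : 2 ≤ n) (γ : Multiplicative (ZMod n) →* G), γ ≠ 1 → ∀ x : G,
    haveI : NeZero n := ⟨by omega⟩
    radonSum f γ x = 0

/-- The Radon transform is injective on `G`. -/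
def RadonInjective (G : Type*) [Group G] : Prop :=
  ∀ f : G → ℂ, RadonNull G f → f = 0

/-! ### Auxiliary definitions and lemmas -/

/-- The element of the group algebra with coefficients given by `f`. -/
noncomputable def algOf {G : Type*} [Group G] [Fintype G] (f : G → ℂ) : MonoidAlgebra ℂ G :=
  ∑ y : G, MonoidAlgebra.single y (f y)

/-- The "geodesic" element of the group algebra attached to `γ`. -/
noncomputable def geod {G : Type*} [Group G] {n : ℕ} [NeZero n]
    (γ : Multiplicative (ZMod n) →* G) : MonoidAlgebra ℂ G :=
  ∑ t : ZMod n, MonoidAlgebra.single ((γ (Multiplicative.ofAdd t))⁻¹) (1 : ℂ)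

lemma algOf_apply {G : Type*} [Group G] [Fintype G] (f : G → ℂ) (y : G) :
    (algOf f).coeff y = f y := by
  classical
  rw [algOf, MonoidAlgebra.coeff_sum, Finsupp.finset_sum_apply]
  simp only [MonoidAlgebra.coeff_single, Finsupp.single_apply]
  rw [Finset.sum_ite_eq' Finset.univ y f]
  simp

lemma mul_geod_apply {G : Type*} [Group G] [Fintype G] (f : G → ℂ) {n : ℕ} [NeZero n]
    (γ : Multiplicative (ZMod n) →* G) (x : G) :
    (algOf f * geod γ).coeff x = ∑ t : ZMod n, f (x * γ (Multiplicative.ofAdd t)) := by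
  classical
  rw [geod, Finset.mul_sum, MonoidAlgebra.coeff_sum, Finsupp.finset_sum_apply]
  refine Finset.sum_congr rfl fun t _ => ?_
  rw [MonoidAlgebra.coeff_mul_single_apply, inv_inv, mul_one, algOf_apply]

lemma asAlg_algOf {G : Type*} [Group G] [Fintype G] {V : Type*} [AddCommGroup V] [Module ℂ V]
    (ρ : Representation ℂ G V) (f : G → ℂ) :
    ρ.asAlgebraHom (algOf f) = ∑ y : G, f y • ρ y := by
  rw [algOf, map_sum]
  exact Finset.sum_congr rfl fun y _ => Representation.asAlgebraHom_single ρ y (f y)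

lemma rho_pow_fixed {G : Type*} [Group G] {V : Type*} [AddCommGroup V] [Module ℂ V]
    (ρ : Representation ℂ G V) {g : G} {v : V} (h : ρ g v = v) (k : ℕ) : ρ (g ^ k) v = v := by
  induction k with
  | zero => simp
  | succ k ih => rw [pow_succ, map_mul, Module.End.mul_apply, h, ih]

lemma rho_inv_fixed {G : Type*} [Group G] {V : Type*} [AddCommGroup V] [Module ℂ V]
    (ρ : Representation ℂ G V) {g : G} {v : V} (h : ρ g v = v) : ρ g⁻¹ v = v := by
  conv_lhs => rw [← h]
  rw [← Module.End.mul_apply, ← map_mul, inv_mul_cancel, map_one, Module.End.one_apply]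

lemma geod_apply_fixed {G : Type*} [Group G] {n : ℕ} [NeZero n]
    (γ : Multiplicative (ZMod n) →* G) {V : Type*} [AddCommGroup V] [Module ℂ V]
    (ρ : Representation ℂ G V) {v : V}
    (hv : ∀ t : ZMod n, ρ (γ (Multiplicative.ofAdd t)) v = v) :
    ρ.asAlgebraHom (geod γ) v = (n : ℂ) • v := by
  rw [geod, map_sum, LinearMap.sum_apply]
  have h : ∀ t : ZMod n,
      ρ.asAlgebraHom (MonoidAlgebra.single ((γ (Multiplicative.ofAdd t))⁻¹) (1:ℂ)) v = v := by
    intro t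
    rw [Representation.asAlgebraHom_single_one]
    exact rho_inv_fixed ρ (hv t)
  rw [Finset.sum_congr rfl fun t _ => h t, Finset.sum_const, Finset.card_univ, ZMod.card,
    Nat.cast_smul_eq_nsmul ℂ]

lemma single_mul_geod {G : Type*} [Group G] {n : ℕ} [NeZero n]
    (γ : Multiplicative (ZMod n) →* G) (t₁ : Multiplicative (ZMod n)) :
    MonoidAlgebra.single (γ t₁) (1:ℂ) * geod γ = geod γ := by
  rw [geod, Finset.mul_sum]
  simp only [MonoidAlgebra.single_mul_single, one_mul]
  apply Fintype.sum_equiv (Equiv.subRight (Multiplicative.toAdd t₁))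
  intro t
  congr 1
  rw [Equiv.subRight_apply, ofAdd_sub, ofAdd_toAdd, div_eq_mul_inv, map_mul, map_inv,
    mul_inv_rev, inv_inv]

lemma geod_eq_zero_of_no_fixed {G : Type*} [Group G] {n : ℕ} [NeZero n]
    {γ : Multiplicative (ZMod n) →* G} (hγ : γ ≠ 1) {V : Type*} [AddCommGroup V] [Module ℂ V]
    (ρ : Representation ℂ G V)
    (hfree : ∀ (x : G) (v : V), x ≠ 1 → ρ x v = v → v = 0) :
    ρ.asAlgebraHom (geod γ) = 0 := by
  obtain ⟨t₁, ht₁⟩ : ∃ t, γ t ≠ 1 := by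
    by_contra h
    push_neg at h
    exact hγ (MonoidHom.ext fun t => (h t).trans rfl)
  apply LinearMap.ext
  intro v
  rw [LinearMap.zero_apply]
  refine hfree (γ t₁) _ ht₁ ?_
  have h2 := congrArg (fun r => ρ.asAlgebraHom r v) (single_mul_geod γ t₁)
  simpa [map_mul, Module.End.mul_apply, Representation.asAlgebraHom_single_one] using h2

/-- The homomorphism `ZMod n → G` sending `1` to an element `g` with `g ^ n = 1`. -/
noncomputable def cycHom {G : Type*} [Group G] (n : ℕ) [NeZero n] (g : G) (hg : g ^ n = 1) :
    Multiplicative (ZMod n) →* G where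
  toFun t := g ^ (Multiplicative.toAdd t).val
  map_one' := by
    show g ^ (0 : ZMod n).val = 1
    rw [ZMod.val_zero, pow_zero]
  map_mul' s t := by
    have hmod : ∀ m : ℕ, g ^ (m % n) = g ^ m := by
      intro m
      conv_rhs => rw [← Nat.mod_add_div m n]
      rw [pow_add, pow_mul, hg, one_pow, mul_one]
    show g ^ (Multiplicative.toAdd s + Multiplicative.toAdd t).val = _
    rw [ZMod.val_add, hmod, pow_add]

lemma ofModule'_asAlgebraHom_apply {G : Type} [Group G] [Fintype G]
    (S : Submodule (MonoidAlgebra ℂ G) (MonoidAlgebra ℂ G)) (r : MonoidAlgebra ℂ G) (v : S) :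
    (Representation.ofModule' (k := ℂ) (G := G) ↥S).asAlgebraHom r v = r • v := by
  rw [Representation.asAlgebraHom_def, Representation.ofModule', Equiv.apply_symm_apply]
  rfl

/-- If an element of the group algebra acts as zero in every irreducible finite-dimensional
representation, it is zero.  (Uses Maschke semisimplicity.) -/
lemma eq_zero_of_forall_irrep {G : Type} [Group G] [Fintype G] (b : MonoidAlgebra ℂ G)
    (hb : ∀ (V : Type) [AddCommGroup V] [Module ℂ V] [FiniteDimensional ℂ V]
      (ρ : Representation ℂ G V), Nontrivial V →
      (∀ W : Submodule ℂ V, (∀ x : G, ∀ v ∈ W, ρ x v ∈ W) → W = ⊥ ∨ W = ⊤) →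
      ρ.asAlgebraHom b = 0) :
    b = 0 := by
  classical
  haveI : NeZero (Fintype.card G : ℂ) := ⟨Nat.cast_ne_zero.mpr Fintype.card_ne_zero⟩
  haveI : FiniteDimensional ℂ (MonoidAlgebra ℂ G) :=
    Module.Finite.equiv ((Finsupp.linearEquivFunOnFinite ℂ ℂ G).symm.trans
      (MonoidAlgebra.coeffLinearEquiv ℂ).symm)
  have key : ∀ S : Submodule (MonoidAlgebra ℂ G) (MonoidAlgebra ℂ G),
      IsSimpleModule (MonoidAlgebra ℂ G) ↥S → ∀ s ∈ S, b * s = 0 := by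
    intro S hS s hs
    haveI := hS
    haveI : FiniteDimensional ℂ ↥S := inferInstanceAs (FiniteDimensional ℂ ↥(S.restrictScalars ℂ))
    haveI : Nontrivial ↥S := IsSimpleModule.nontrivial (MonoidAlgebra ℂ G) ↥S
    set ρ : Representation ℂ G ↥S := Representation.ofModule' (k := ℂ) (G := G) ↥S with hρ
    have hirr : ∀ W : Submodule ℂ ↥S, (∀ x : G, ∀ v ∈ W, ρ x v ∈ W) → W = ⊥ ∨ W = ⊤ := by
      intro W hW
      let W' : Submodule (MonoidAlgebra ℂ G) ↥S :=
        { carrier := W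
          add_mem' := fun h1 h2 => W.add_mem h1 h2
          zero_mem' := W.zero_mem
          smul_mem' := by
            intro r w hw
            have h1 : r • w = ρ.asAlgebraHom r w := (ofModule'_asAlgebraHom_apply S r w).symm
            rw [h1, Representation.asAlgebraHom_def, MonoidAlgebra.lift_apply, Finsupp.sum,
              LinearMap.sum_apply]
            refine Submodule.sum_mem W fun g _ => ?_
            rw [LinearMap.smul_apply]
            exact W.smul_mem _ (hW g w hw) }
      rcases eq_bot_or_eq_top W' with h | h
      · left
        rw [Submodule.eq_bot_iff] at h ⊢
        exact fun x hx => h x hx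
      · right
        rw [Submodule.eq_top_iff'] at h ⊢
        exact fun x => h x
    have hA : ρ.asAlgebraHom b = 0 := hb ↥S ρ inferInstance hirr
    have h2 : b • (⟨s, hs⟩ : ↥S) = 0 := by
      rw [← ofModule'_asAlgebraHom_apply S b ⟨s, hs⟩, hA, LinearMap.zero_apply]
    have h3 := congrArg Subtype.val h2
    simpa using h3
  haveI : IsSemisimpleRing (MonoidAlgebra ℂ G) := inferInstance
  have htop := IsSemisimpleModule.sSup_simples_eq_top (MonoidAlgebra ℂ G) (MonoidAlgebra ℂ G)
  have h1 : (1 : MonoidAlgebra ℂ G) ∈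
      sSup {m : Submodule (MonoidAlgebra ℂ G) (MonoidAlgebra ℂ G) |
        IsSimpleModule (MonoidAlgebra ℂ G) ↥m} := by
    rw [htop]; trivial
  rw [sSup_eq_iSup'] at h1
  have h2 : b * 1 = 0 := by
    refine Submodule.iSup_induction _ (motive := fun x => b * x = 0) h1
      (fun S x hx => key S.1 S.2 x hx) (mul_zero b) (fun x y hx hy => ?_)
    show b * (x + y) = 0
    rw [mul_add, hx, hy, add_zero]
  rwa [mul_one] at h2

/-- The backward implication, for a group in `Type 0`. -/
lemma backward_core {G : Type} [Group G] [Fintype G] (f : G → ℂ)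
    (H : ∀ (V : Type) [AddCommGroup V] [Module ℂ V] [FiniteDimensional ℂ V]
        (ρ : Representation ℂ G V),
        (Nontrivial V ∧ ∀ W : Submodule ℂ V, (∀ x : G, ∀ v ∈ W, ρ x v ∈ W) → W = ⊥ ∨ W = ⊤) →
        (∃ (x : G) (v : V), x ≠ 1 ∧ v ≠ 0 ∧ ρ x v = v) →
        (∑ y : G, f y • ρ y) = 0) :
    RadonNull G f := by
  intro n hn γ hγ x
  haveI : NeZero n := ⟨by omega⟩
  have h0 : algOf f * geod γ = 0 := by
    apply eq_zero_of_forall_irrep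
    intro V _ _ _ ρ hNT hirr
    rw [map_mul]
    by_cases hfix : ∃ (x : G) (v : V), x ≠ 1 ∧ v ≠ 0 ∧ ρ x v = v
    · have hT := H V ρ ⟨hNT, hirr⟩ hfix
      rw [asAlg_algOf ρ f, hT, zero_mul]
    · push_neg at hfix
      have hfree : ∀ (g : G) (v : V), g ≠ 1 → ρ g v = v → v = 0 := by
        intro g v hg hgv
        by_contra hv
        exact (hfix g v hg hv) hgv
      rw [geod_eq_zero_of_no_fixed hγ ρ hfree, mul_zero]
  show radonSum f γ x = 0
  rw [radonSum, ← mul_geod_apply f γ x, h0]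
  rfl

theorem radon_null_iff_fourier_vanishes {G : Type*} [Group G] [Fintype G] (f : G → ℂ) :
    RadonNull G f ↔
      ∀ (V : Type) [AddCommGroup V] [Module ℂ V] [FiniteDimensional ℂ V]
        (ρ : Representation ℂ G V),
        (Nontrivial V ∧
          ∀ W : Submodule ℂ V, (∀ x : G, ∀ v ∈ W, ρ x v ∈ W) → W = ⊥ ∨ W = ⊤) →
        (∃ (x : G) (v : V), x ≠ 1 ∧ v ≠ 0 ∧ ρ x v = v) →
        (∑ y : G, f y • ρ y) = 0 := by
  classical
  constructor
  · -- Forward direction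
    intro hnull V _ _ _ ρ hpair hfix
    obtain ⟨hNT, hirr⟩ := hpair
    obtain ⟨x₀, v₀, hx₀, hv₀, hfix₀⟩ := hfix
    set gen : Set V := {v | ∃ g : G, g ≠ 1 ∧ ρ g v = v} with hgen
    have hTv : ∀ v ∈ gen, (∑ y : G, f y • ρ y) v = 0 := by
      rintro v ⟨g, hg, hgv⟩
      have hn0 : orderOf g ≠ 0 := (orderOf_pos g).ne'
      have hn1 : orderOf g ≠ 1 := fun h => hg (orderOf_eq_one_iff.mp h)
      have hn : 2 ≤ orderOf g := by omega
      haveI : NeZero (orderOf g) := ⟨hn0⟩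
      haveI : Fact (1 < orderOf g) := ⟨by omega⟩
      set γ := cycHom (orderOf g) g (pow_orderOf_eq_one g) with hγdef
      have hγ : γ ≠ 1 := by
        intro h
        apply hg
        have h1 : γ (Multiplicative.ofAdd (1 : ZMod (orderOf g))) = 1 := by rw [h]; rfl
        rwa [show γ (Multiplicative.ofAdd (1 : ZMod (orderOf g)))
            = g ^ (1 : ZMod (orderOf g)).val from rfl, ZMod.val_one, pow_one] at h1
      have h0 : algOf f * geod γ = 0 := by
        refine MonoidAlgebra.coeff_injective (Finsupp.ext fun x => ?_)
        have h2 := hnull (orderOf g) hn γ hγ x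
        rw [radonSum] at h2
        rw [mul_geod_apply f γ x, h2]
        rfl
      have h1 := congrArg (fun r : MonoidAlgebra ℂ G => ρ.asAlgebraHom r v) h0
      simp only [map_mul, Module.End.mul_apply, map_zero, LinearMap.zero_apply] at h1
      have hv : ∀ t : ZMod (orderOf g), ρ (γ (Multiplicative.ofAdd t)) v = v :=
        fun t => rho_pow_fixed ρ hgv _
      rw [geod_apply_fixed γ ρ hv, map_smul, asAlg_algOf ρ f] at h1
      rcases smul_eq_zero.mp h1 with h | h
      · exact absurd h (Nat.cast_ne_zero.mpr hn0)
      · exact h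
    have hWtop : Submodule.span ℂ gen = ⊤ := by
      have hinv : ∀ x : G, ∀ v ∈ Submodule.span ℂ gen, ρ x v ∈ Submodule.span ℂ gen := by
        intro x v hv
        have hle : Submodule.span ℂ gen ≤ (Submodule.span ℂ gen).comap (ρ x) := by
          rw [Submodule.span_le]
          rintro w ⟨g, hg, hgw⟩
          refine Submodule.subset_span ⟨x * g * x⁻¹, fun h => hg ?_, ?_⟩
          · have h2 : g = x⁻¹ * (x * g * x⁻¹) * x := by group
            rw [h] at h2
            simpa using h2
          · rw [← Module.End.mul_apply, ← map_mul]
            have he : x * g * x⁻¹ * x = x * g := by group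
            rw [he, map_mul, Module.End.mul_apply, hgw]
        exact hle hv
      rcases hirr (Submodule.span ℂ gen) hinv with h | h
      · exfalso
        apply hv₀
        have hv0 : v₀ ∈ Submodule.span ℂ gen := Submodule.subset_span ⟨x₀, hx₀, hfix₀⟩
        rwa [h, Submodule.mem_bot] at hv0
      · exact h
    apply LinearMap.ext
    intro v
    rw [LinearMap.zero_apply]
    have hv : v ∈ Submodule.span ℂ gen := by rw [hWtop]; trivial
    refine Submodule.span_induction (p := fun v _ => (∑ y : G, f y • ρ y) v = 0)
      (fun w hw => hTv w hw)
      (by show (∑ y : G, f y • ρ y) 0 = 0; rw [map_zero])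
      (fun w u _ _ hw hu => by
        show (∑ y : G, f y • ρ y) (w + u) = 0
        rw [map_add]
        rw [hw, hu, add_zero])
      (fun c w _ hw => by
        show (∑ y : G, f y • ρ y) (c • w) = 0
        rw [map_smul]
        rw [hw, smul_zero]) hv
  · -- Backward direction: transfer to a `Type 0` copy of `G`.
    intro H n hn γ hγ x
    haveI : NeZero n := ⟨by omega⟩
    let φ : Shrink.{0} G ≃* G := Shrink.mulEquiv
    letI : Fintype (Shrink.{0} G) := Fintype.ofEquiv G (equivShrink.{0} G)
    have H₀ : ∀ (V : Type) [AddCommGroup V] [Module ℂ V] [FiniteDimensional ℂ V]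
        (ρ : Representation ℂ (Shrink.{0} G) V),
        (Nontrivial V ∧ ∀ W : Submodule ℂ V,
          (∀ x : Shrink.{0} G, ∀ v ∈ W, ρ x v ∈ W) → W = ⊥ ∨ W = ⊤) →
        (∃ (x : Shrink.{0} G) (v : V), x ≠ 1 ∧ v ≠ 0 ∧ ρ x v = v) →
        (∑ y : Shrink.{0} G, (f ∘ φ) y • ρ y) = 0 := by
      intro V _ _ _ ρ hpair hfix
      obtain ⟨hNT, hirr⟩ := hpair
      obtain ⟨x₀, v₀, hx₀, hv₀, hfix₀⟩ := hfix
      let ρ' : Representation ℂ G V := ρ.comp φ.symm.toMonoidHom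
      have hρ' : ∀ y : Shrink.{0} G, ρ' (φ y) = ρ y := by
        intro y
        show ρ (φ.symm (φ y)) = ρ y
        rw [MulEquiv.symm_apply_apply]
      have hT := H V ρ' ⟨hNT, fun W hW => hirr W fun y v hv => by
          rw [← hρ' y]; exact hW (φ y) v hv⟩
        ⟨φ x₀, v₀, fun h => hx₀ (φ.injective (by rw [h, map_one])), hv₀, by rw [hρ' x₀]; exact hfix₀⟩
      have hsum : ∑ y : Shrink.{0} G, (f ∘ φ) y • ρ y = ∑ y : G, f y • ρ' y := by
        refine Fintype.sum_equiv φ.toEquiv _ _ fun y => ?_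
        rw [Function.comp_apply, ← hρ' y]
        rfl
      rw [hsum, hT]
    have hnull₀ : RadonNull (Shrink.{0} G) (f ∘ φ) := backward_core (f ∘ φ) H₀
    let γ₀ : Multiplicative (ZMod n) →* Shrink.{0} G := φ.symm.toMonoidHom.comp γ
    have hγ₀ : γ₀ ≠ 1 := by
      intro h
      apply hγ
      refine MonoidHom.ext fun t => ?_
      have ht := DFunLike.congr_fun h t
      have : φ.symm (γ t) = 1 := ht
      have h2 := congrArg φ this
      rwa [MulEquiv.apply_symm_apply, map_one] at h2
    have h3 := hnull₀ n hn γ₀ hγ₀ (φ.symm x)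
    rw [radonSum] at h3 ⊢
    rw [← h3]
    refine Finset.sum_congr rfl fun t _ => ?_
    show f (x * γ (Multiplicative.ofAdd t)) =
      f (φ (φ.symm x * φ.symm (γ (Multiplicative.ofAdd t))))
    rw [map_mul, MulEquiv.apply_symm_apply, MulEquiv.apply_symm_apply]
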